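/- arXiv:1407.5964 — 3 statements merged into one kernel-verified Lean document; each statement's English description precedes it below -/
import Mathlib

section
/- Let p be a prime number, let l_0 ≤ l_1 ≤ … ≤ l_q be a non-decreasing sequence of natural numbers, and set n = p^{l_0} + p^{l_1} + … + p^{l_q}. Write the base-p expansion of n as n = λ_1·p^{m_1} + λ_2·p^{m_2} + … + λ_k·p^{m_k}, where m_1 < m_2 < … < m_k and 1 ≤ λ_i ≤ p−1 for each i. Then there exists a partition S_1, S_2, …, S_k of the index set {0, 1, …, q} such that for every i with 1 ≤ i ≤ k one has ∑_{j ∈ S_i} p^{l_j} = λ_i·p^{m_i}. -/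
open Finset

/-- A sum of digits times powers with exponents strictly increasing and below `M`
is less than `p ^ M`. -/
lemma digits_sum_lt (p : ℕ) (hp : 2 ≤ p) :
    ∀ (k : ℕ) (m lam : Fin k → ℕ), StrictMono m → (∀ i, lam i ≤ p - 1) →
    ∀ M : ℕ, (∀ i, m i < M) → ∑ i, lam i * p ^ m i < p ^ M := by
  intro k
  induction k with
  | zero =>
    intro m lam _ _ M _
    simpa using pow_pos (by omega : 0 < p) M
  | succ k ih =>
    intro m lam hm hlam M hM
    rw [Fin.sum_univ_castSucc]
    have h1 : ∑ i : Fin k, lam i.castSucc * p ^ m i.castSucc < p ^ m (Fin.last k) := by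
      apply ih _ _ (fun i j hij => hm (by simpa using hij)) (fun i => hlam _)
      intro i; exact hm (Fin.castSucc_lt_last i)
    have h2 : lam (Fin.last k) * p ^ m (Fin.last k) ≤ (p - 1) * p ^ m (Fin.last k) :=
      Nat.mul_le_mul_right _ (hlam _)
    have h3 : p ^ (m (Fin.last k) + 1) ≤ p ^ M := Nat.pow_le_pow_right (by omega) (hM _)
    have h4 : p ^ (m (Fin.last k) + 1) = p ^ m (Fin.last k) + (p - 1) * p ^ m (Fin.last k) := by
      rw [pow_succ]
      have : p = 1 + (p - 1) := by omega
      nth_rw 2 [this]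
      ring
    omega

/-- The key inductive lemma. -/
lemma key_partition (p : ℕ) (hp : 2 ≤ p) (q : ℕ) (l : Fin (q + 1) → ℕ) (hl : Monotone l) :
    ∀ (k : ℕ) (m lam : Fin k → ℕ), StrictMono m → (∀ i, 1 ≤ lam i ∧ lam i ≤ p - 1) →
    ∀ t : ℕ, t ≤ q + 1 →
    (∑ j ∈ univ.filter (fun j : Fin (q + 1) => (j : ℕ) < t), p ^ l j
      = ∑ i, lam i * p ^ m i) →
    ∃ S : Fin k → Finset (Fin (q + 1)),
      (∀ i j, i ≠ j → Disjoint (S i) (S j)) ∧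
      (univ.biUnion S = univ.filter (fun j : Fin (q + 1) => (j : ℕ) < t)) ∧
      (∀ i, ∑ j ∈ S i, p ^ l j = lam i * p ^ m i) := by
  intro k
  induction k with
  | zero =>
    intro m lam _ _ t ht hsum
    refine ⟨fun i => ∅, fun i => i.elim0, ?_, fun i => i.elim0⟩
    have h0 : ∑ i : Fin 0, lam i * p ^ m i = 0 := by simp
    rw [h0] at hsum
    have hempty : univ.filter (fun j : Fin (q + 1) => (j : ℕ) < t) = ∅ := by
      rw [Finset.eq_empty_iff_forall_notMem]
      intro a ha
      have := Finset.sum_eq_zero_iff.mp hsum a ha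
      have : 0 < p ^ l a := pow_pos (by omega) _
      omega
    rw [hempty]
    simp
  | succ k ih =>
    intro m lam hm hlam t ht hsum
    -- prefix sums
    set f : ℕ → ℕ := fun s => ∑ j ∈ univ.filter (fun j : Fin (q + 1) => (j : ℕ) < s), p ^ l j
      with hf
    set M := m (Fin.last k) with hMdef
    set L := lam (Fin.last k) with hLdef
    set rest := ∑ i : Fin k, lam (Fin.castSucc i) * p ^ m (Fin.castSucc i) with hrest
    have hsum' : f t = rest + L * p ^ M := by
      rw [hf]; simp only []
      rw [hsum, Fin.sum_univ_castSucc]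
    have hrest_lt : rest < p ^ M := by
      apply digits_sum_lt p hp k _ _ (fun i j hij => hm (by simpa using hij))
        (fun i => (hlam _).2)
      intro i; exact hm (Fin.castSucc_lt_last i)
    have hL1 : 1 ≤ L := (hlam _).1
    have hLp : L ≤ p - 1 := (hlam _).2
    have hpM : 0 < p ^ M := pow_pos (by omega) _
    have hf0 : f 0 = 0 := by
      rw [hf]; simp
    -- step of prefix sum
    have hfstep : ∀ s (hs : s < q + 1), f (s + 1) = f s + p ^ l ⟨s, hs⟩ := by
      intro s hs
      rw [hf]; simp only []
      have hset : univ.filter (fun j : Fin (q + 1) => (j : ℕ) < s + 1)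
          = insert ⟨s, hs⟩ (univ.filter (fun j : Fin (q + 1) => (j : ℕ) < s)) := by
        ext j
        simp only [mem_filter, mem_univ, true_and, mem_insert, Fin.ext_iff]
        omega
      rw [hset, Finset.sum_insert (by simp)]
      omega
    -- the cut point
    set t' := Nat.findGreatest (fun s => f s ≤ rest) t with ht'
    have ht'le : t' ≤ t := Nat.findGreatest_le t
    have ht'P : f t' ≤ rest := Nat.findGreatest_spec (P := fun s => f s ≤ rest) (Nat.zero_le t) (by show f 0 ≤ rest; omega)
    have ht'lt : t' < t := by
      rcases Nat.lt_or_ge t' t with h | h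
      · exact h
      · exfalso
        have : t' = t := le_antisymm ht'le h
        rw [this, hsum'] at ht'P
        have : 0 < L * p ^ M := Nat.mul_pos (by omega) hpM
        omega
    have ht'q : t' < q + 1 := lt_of_lt_of_le ht'lt ht
    set j0 : Fin (q + 1) := ⟨t', ht'q⟩ with hj0
    have hgt : ¬ f (t' + 1) ≤ rest :=
      Nat.findGreatest_is_greatest (P := fun s => f s ≤ rest) (n := t) (Nat.lt_succ_self t') (by omega)
    have hgt' : rest < f t' + p ^ l j0 := by
      rw [← hfstep t' ht'q]; omega
    -- the top interval
    set D := univ.filter (fun j : Fin (q + 1) => t' ≤ (j : ℕ) ∧ (j : ℕ) < t) with hD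
    have hsplit : f t = f t' + ∑ j ∈ D, p ^ l j := by
      rw [hf]; simp only []
      rw [← Finset.sum_filter_add_sum_filter_not
        (univ.filter (fun j : Fin (q + 1) => (j : ℕ) < t)) (fun j => (j : ℕ) < t')]
      congr 1
      · apply Finset.sum_congr _ (fun _ _ => rfl)
        ext j
        simp only [mem_filter, mem_univ, true_and]
        omega
      · apply Finset.sum_congr _ (fun _ _ => rfl)
        ext j
        simp only [hD, mem_filter, mem_univ, true_and, not_lt]
        omega
    set d := rest - f t' with hd
    have hDsum : ∑ j ∈ D, p ^ l j = d + L * p ^ M := by omega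
    -- divisibility
    have hdvdD : ∀ j ∈ D, p ^ l j0 ∣ p ^ l j := by
      intro j hj
      apply pow_dvd_pow
      apply hl
      have : t' ≤ (j : ℕ) := by
        rw [hD] at hj
        simp only [mem_filter, mem_univ, true_and] at hj
        exact hj.1
      exact this
    have hdvdsum : p ^ l j0 ∣ ∑ j ∈ D, p ^ l j := Finset.dvd_sum hdvdD
    have hj0D : j0 ∈ D := by
      rw [hD]
      simp only [mem_filter, mem_univ, true_and, hj0]
      omega
    have hle_sum : p ^ l j0 ≤ ∑ j ∈ D, p ^ l j :=
      Finset.single_le_sum (f := fun j => p ^ l j) (fun j _ => Nat.zero_le _) hj0D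
    have hsum_lt : ∑ j ∈ D, p ^ l j < p ^ (M + 1) := by
      have h1 : d < p ^ M := by omega
      have h2 : L * p ^ M ≤ (p - 1) * p ^ M := Nat.mul_le_mul_right _ hLp
      have h3 : p ^ (M + 1) = p ^ M + (p - 1) * p ^ M := by
        rw [pow_succ]
        have : p = 1 + (p - 1) := by omega
        nth_rw 2 [this]
        ring
      omega
    have hlj0M : l j0 ≤ M := by
      by_contra hcon
      have : p ^ (M + 1) ≤ p ^ l j0 := Nat.pow_le_pow_right (by omega) (by omega)
      omega
    have hdvd_d : p ^ l j0 ∣ d := by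
      have h1 : p ^ l j0 ∣ L * p ^ M := Dvd.dvd.mul_left (pow_dvd_pow p hlj0M) L
      have h2 : d = (∑ j ∈ D, p ^ l j) - L * p ^ M := by omega
      rw [h2]
      exact Nat.dvd_sub hdvdsum h1
    have hd0 : d = 0 := by
      by_contra hcon
      have : p ^ l j0 ≤ d := Nat.le_of_dvd (by omega) hdvd_d
      omega
    have hft' : f t' = rest := by omega
    -- apply induction hypothesis
    obtain ⟨S', hS'disj, hS'union, hS'sum⟩ :=
      ih (fun i => m (Fin.castSucc i)) (fun i => lam (Fin.castSucc i))
        (fun i j hij => hm (by simpa using hij)) (fun i => hlam _)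
        t' (by omega) (by rw [← hrest]; exact hft')
    -- build the partition
    refine ⟨fun i => if h : i = Fin.last k then D else S' (i.castPred h), ?_, ?_, ?_⟩
    · intro i j hij
      by_cases hi : i = Fin.last k
      · by_cases hj : j = Fin.last k
        · exact absurd (hi.trans hj.symm) hij
        · simp only [dif_pos hi, dif_neg hj]
          rw [Finset.disjoint_left]
          intro a haD haS
          have : a ∈ univ.biUnion S' := Finset.mem_biUnion.mpr ⟨_, mem_univ _, haS⟩
          rw [hS'union] at this
          simp only [mem_filter, mem_univ, true_and] at this
          rw [hD] at haD
          simp only [mem_filter, mem_univ, true_and] at haD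
          omega
      · by_cases hj : j = Fin.last k
        · simp only [dif_neg hi, dif_pos hj]
          rw [Finset.disjoint_left]
          intro a haS haD
          have : a ∈ univ.biUnion S' := Finset.mem_biUnion.mpr ⟨_, mem_univ _, haS⟩
          rw [hS'union] at this
          simp only [mem_filter, mem_univ, true_and] at this
          rw [hD] at haD
          simp only [mem_filter, mem_univ, true_and] at haD
          omega
        · simp only [dif_neg hi, dif_neg hj]
          apply hS'disj
          intro hcon
          apply hij
          have := congrArg Fin.castSucc hcon
          rwa [Fin.castSucc_castPred, Fin.castSucc_castPred] at this
    · ext a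
      simp only [Finset.mem_biUnion, mem_univ, true_and, mem_filter]
      constructor
      · rintro ⟨i, hi⟩
        by_cases h : i = Fin.last k
        · simp only [dif_pos h] at hi
          rw [hD] at hi
          simp only [mem_filter, mem_univ, true_and] at hi
          omega
        · simp only [dif_neg h] at hi
          have : a ∈ univ.biUnion S' := Finset.mem_biUnion.mpr ⟨_, mem_univ _, hi⟩
          rw [hS'union] at this
          simp only [mem_filter, mem_univ, true_and] at this
          omega
      · intro ha
        by_cases hc : (a : ℕ) < t'
        · have : a ∈ univ.biUnion S' := by
            rw [hS'union]
            simp only [mem_filter, mem_univ, true_and]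
            exact hc
          obtain ⟨i', _, hi'⟩ := Finset.mem_biUnion.mp this
          refine ⟨Fin.castSucc i', ?_⟩
          have hne : Fin.castSucc i' ≠ Fin.last k := Fin.ne_of_lt (Fin.castSucc_lt_last i')
          simp only [dif_neg hne]
          rwa [Fin.castPred_castSucc]
        · refine ⟨Fin.last k, ?_⟩
          have haD : a ∈ D := by
            rw [hD]
            simp only [mem_filter, mem_univ, true_and]
            exact ⟨Nat.le_of_not_lt hc, ha⟩
          simpa using haD
    · intro i
      by_cases h : i = Fin.last k
      · simp only [dif_pos h]; subst h
        rw [← hMdef, ← hLdef] at *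
        omega
      · simp only [dif_neg h]
        have := hS'sum (i.castPred h)
        rwa [Fin.castSucc_castPred] at this

/-- Let `p` be a prime, `l 0 ≤ l 1 ≤ … ≤ l q` a non-decreasing sequence of naturals and
`n = ∑ j, p ^ l j`.  Write the base-`p` expansion of `n` as
`n = ∑ i, lam i * p ^ m i` with `m` strictly increasing and `1 ≤ lam i ≤ p - 1`.
Then there is a partition `S 1, …, S k` of the index set `{0, …, q}` such that
`∑_{j ∈ S i} p ^ l j = lam i * p ^ m i` for every `i`. -/
theorem stmt0 (p : ℕ) (hp : p.Prime) (q : ℕ) (l : Fin (q + 1) → ℕ)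
    (hl : Monotone l) (n : ℕ) (hn : n = ∑ j : Fin (q + 1), p ^ l j)
    (k : ℕ) (m : Fin k → ℕ) (lam : Fin k → ℕ)
    (hm : StrictMono m) (hlam : ∀ i, 1 ≤ lam i ∧ lam i ≤ p - 1)
    (hexp : n = ∑ i : Fin k, lam i * p ^ m i) :
    ∃ S : Fin k → Finset (Fin (q + 1)),
      (∀ i j, i ≠ j → Disjoint (S i) (S j)) ∧
      (Finset.univ.biUnion S = Finset.univ) ∧
      (∀ i, ∑ j ∈ S i, p ^ l j = lam i * p ^ m i) := by
  have hfilter : (Finset.univ.filter (fun j : Fin (q + 1) => (j : ℕ) < q + 1))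
      = (Finset.univ : Finset (Fin (q + 1))) := by
    ext j
    simp [j.isLt]
    omega
  obtain ⟨S, h1, h2, h3⟩ := key_partition p hp.two_le q l hl k m lam hm hlam (q + 1)
    le_rfl (by rw [hfilter, ← hn, hexp])
  exact ⟨S, h1, by rw [h2, hfilter], h3⟩
end

section
/- Let p be a prime number and let λ = (λ_1, …, λ_t) be a sequence of positive natural numbers with λ_1 + … + λ_t = d. Let δ be a natural number such that δ > max{λ_1, …, λ_t} and such that for every index i and every natural number s with 1 ≤ s ≤ d·p^{λ_i} − λ_i, the p-adic length of p^δ − s is strictly greater than d. Suppose l_1 ≤ l_2 ≤ … ≤ l_d is a non-decreasing sequence of natural numbers satisfying λ_1 + p^{δ}·λ_2 + p^{2δ}·λ_3 + … + p^{(t−1)δ}·λ_t = p^{l_1} + p^{l_2} + … + p^{l_d}. Then there exists a unique partition of {1, …, d} into t subsets E_1, …, E_t such that: (i) for every i with 1 ≤ i ≤ t one has ∑_{h ∈ E_i} p^{l_h} = p^{(i−1)δ}·λ_i; (ii) each subset E_i is an interval of consecutive natural numbers {k, k+1, …, k+r}; and (iii) the cardinality of E_1 is at most λ_1. -/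
/-- The `p`-adic length of a natural number `m`: the sum of the digits of its base-`p`
expansion, i.e. the minimal number of (not necessarily distinct) powers of `p` whose
sum equals `m`. -/
def padicLength (p m : ℕ) : ℕ := (Nat.digits p m).sum


namespace Stmt3Aux

def Pfun (p d : ℕ) (l : Fin d → ℕ) (k : ℕ) : ℕ :=
  ∑ h ∈ Finset.univ.filter (fun h : Fin d => h.val < k), p ^ l h

def Tfun (p t δ : ℕ) (lam : Fin t → ℕ) (j : ℕ) : ℕ :=
  ∑ i ∈ Finset.univ.filter (fun i : Fin t => i.val < j), lam i * p ^ (i.val * δ)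

lemma Pfun_zero (p d : ℕ) (l : Fin d → ℕ) : Pfun p d l 0 = 0 := by
  simp [Pfun]

lemma Pfun_succ (p d : ℕ) (l : Fin d → ℕ) {k : ℕ} (hk : k < d) :
    Pfun p d l (k + 1) = Pfun p d l k + p ^ l ⟨k, hk⟩ := by
  unfold Pfun
  have h : Finset.univ.filter (fun h : Fin d => h.val < k + 1)
      = insert ⟨k, hk⟩ (Finset.univ.filter (fun h : Fin d => h.val < k)) := by
    ext x
    simp [Fin.ext_iff]
    omega
  rw [h, Finset.sum_insert (by simp)]
  ring

lemma Pfun_mono (p d : ℕ) (l : Fin d → ℕ) {a b : ℕ} (hab : a ≤ b) :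
    Pfun p d l a ≤ Pfun p d l b := by
  apply Finset.sum_le_sum_of_subset
  intro h hh
  simp only [Finset.mem_filter, Finset.mem_univ, true_and] at *
  omega

lemma Pfun_d (p d : ℕ) (l : Fin d → ℕ) : Pfun p d l d = ∑ h : Fin d, p ^ l h := by
  unfold Pfun
  rw [Finset.filter_true_of_mem]
  intro h _
  exact h.isLt

lemma Pfun_strict (p d : ℕ) (l : Fin d → ℕ) (hp : 0 < p) {a b : ℕ}
    (hab : a < b) (hbd : b ≤ d) : Pfun p d l a < Pfun p d l b := by
  have had : a < d := lt_of_lt_of_le hab hbd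
  calc Pfun p d l a < Pfun p d l (a + 1) := by
        rw [Pfun_succ p d l had]
        have := pow_pos hp (l ⟨a, had⟩)
        omega
    _ ≤ Pfun p d l b := Pfun_mono p d l hab

lemma Pfun_inj (p d : ℕ) (l : Fin d → ℕ) (hp : 0 < p) {a b : ℕ}
    (ha : a ≤ d) (hb : b ≤ d) (h : Pfun p d l a = Pfun p d l b) : a = b := by
  rcases lt_trichotomy a b with hlt | heq | hgt
  · exact absurd h (Nat.ne_of_lt (Pfun_strict p d l hp hlt hb))
  · exact heq
  · exact absurd h.symm (Nat.ne_of_lt (Pfun_strict p d l hp hgt ha))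

lemma Pfun_split (p d : ℕ) (l : Fin d → ℕ) {a b : ℕ} (hab : a ≤ b) :
    Pfun p d l b = Pfun p d l a
      + ∑ h ∈ Finset.univ.filter (fun h : Fin d => a ≤ h.val ∧ h.val < b), p ^ l h := by
  unfold Pfun
  have hu : Finset.univ.filter (fun h : Fin d => h.val < b)
      = Finset.univ.filter (fun h : Fin d => h.val < a)
        ∪ Finset.univ.filter (fun h : Fin d => a ≤ h.val ∧ h.val < b) := by
    ext x
    simp
    omega
  have hdis : Disjoint (Finset.univ.filter (fun h : Fin d => h.val < a))
      (Finset.univ.filter (fun h : Fin d => a ≤ h.val ∧ h.val < b)) := by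
    rw [Finset.disjoint_left]
    intro x hx1 hx2
    simp at hx1 hx2
    omega
  rw [hu, Finset.sum_union hdis]

lemma Pfun_ge (p d : ℕ) (l : Fin d → ℕ) (hp : 0 < p) :
    ∀ k, k ≤ d → k ≤ Pfun p d l k := by
  intro k
  induction k with
  | zero => intro _; exact Nat.zero_le _
  | succ k ih =>
    intro hk
    rw [Pfun_succ p d l (by omega)]
    have h1 := ih (by omega)
    have h2 := pow_pos hp (l ⟨k, by omega⟩)
    omega

lemma Tfun_zero (p t δ : ℕ) (lam : Fin t → ℕ) : Tfun p t δ lam 0 = 0 := by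
  simp [Tfun]

lemma Tfun_succ (p t δ : ℕ) (lam : Fin t → ℕ) {j : ℕ} (hj : j < t) :
    Tfun p t δ lam (j + 1) = Tfun p t δ lam j + lam ⟨j, hj⟩ * p ^ (j * δ) := by
  unfold Tfun
  have h : Finset.univ.filter (fun i : Fin t => i.val < j + 1)
      = insert ⟨j, hj⟩ (Finset.univ.filter (fun i : Fin t => i.val < j)) := by
    ext x
    simp [Fin.ext_iff]
    omega
  rw [h, Finset.sum_insert (by simp)]
  ring

lemma Tfun_mono (p t δ : ℕ) (lam : Fin t → ℕ) {a b : ℕ} (hab : a ≤ b) :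
    Tfun p t δ lam a ≤ Tfun p t δ lam b := by
  apply Finset.sum_le_sum_of_subset
  intro h hh
  simp only [Finset.mem_filter, Finset.mem_univ, true_and] at *
  omega

lemma Tfun_t (p t δ : ℕ) (lam : Fin t → ℕ) :
    Tfun p t δ lam t = ∑ i : Fin t, lam i * p ^ (i.val * δ) := by
  unfold Tfun
  rw [Finset.filter_true_of_mem]
  intro i _
  exact i.isLt

lemma Tfun_split (p t δ : ℕ) (lam : Fin t → ℕ) (j : ℕ) :
    ∃ M, (∑ i : Fin t, lam i * p ^ (i.val * δ)) = Tfun p t δ lam j + M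
      ∧ p ^ (j * δ) ∣ M := by
  refine ⟨∑ i ∈ Finset.univ.filter (fun i : Fin t => ¬ i.val < j), lam i * p ^ (i.val * δ),
    ?_, ?_⟩
  · rw [Tfun]
    exact (Finset.sum_filter_add_sum_filter_not _ _ _).symm
  · apply Finset.dvd_sum
    intro i hi
    simp only [Finset.mem_filter, Finset.mem_univ, true_and, not_lt] at hi
    exact Dvd.dvd.mul_left (pow_dvd_pow p (Nat.mul_le_mul_right δ hi)) _

end Stmt3Aux

open Stmt3Aux

/-- Let `p` be prime and `lam = (λ₁, …, λ_t)` positive naturals with `λ₁ + ⋯ + λ_t = d`.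
Let `δ` satisfy `δ > max λᵢ` and suppose that for every `i` and every
`1 ≤ s ≤ d·p^{λᵢ} − λᵢ` the `p`-adic length of `p^δ − s` is `> d`.
If `l₁ ≤ … ≤ l_d` satisfies `λ₁ + p^δ·λ₂ + ⋯ + p^{(t−1)δ}·λ_t = p^{l₁} + ⋯ + p^{l_d}`,
then there is a unique partition of `{1, …, d}` into `t` subsets `E₁, …, E_t` such that
(i) `∑_{h ∈ Eᵢ} p^{l_h} = p^{(i−1)δ}·λᵢ` for every `i`;
(ii) each `Eᵢ` is an interval of consecutive indices; and
(iii) `card E₁ ≤ λ₁`. -/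
theorem stmt3 (p : ℕ) (hp : p.Prime) (t : ℕ) (ht : 0 < t) (lam : Fin t → ℕ)
    (hlam_pos : ∀ i, 0 < lam i) (d : ℕ) (hd : ∑ i : Fin t, lam i = d)
    (δ : ℕ) (hδ : ∀ i, lam i < δ)
    (hlen : ∀ i : Fin t, ∀ s : ℕ, 1 ≤ s → s ≤ d * p ^ lam i - lam i →
      d < padicLength p (p ^ δ - s))
    (l : Fin d → ℕ) (hl : Monotone l)
    (hsum : ∑ i : Fin t, lam i * p ^ (i.val * δ) = ∑ h : Fin d, p ^ l h) :
    ∃! E : Fin t → Finset (Fin d),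
      (∀ i j, i ≠ j → Disjoint (E i) (E j)) ∧
      (Finset.univ.biUnion E = Finset.univ) ∧
      (∀ i, ∑ h ∈ E i, p ^ l h = p ^ (i.val * δ) * lam i) ∧
      (∀ i, ∃ a b : Fin d, E i = Finset.Icc a b) ∧
      (E ⟨0, ht⟩).card ≤ lam ⟨0, ht⟩ := by
  classical
  have hp2 : 2 ≤ p := hp.two_le
  have hp0 : 0 < p := by omega
  have hlam_le_d : ∀ i, lam i ≤ d :=
    fun i => hd ▸ Finset.single_le_sum (fun j _ => Nat.zero_le (lam j)) (Finset.mem_univ i)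
  have hd1 : 1 ≤ d := le_trans (hlam_pos ⟨0, ht⟩) (hlam_le_d ⟨0, ht⟩)
  have hplam : ∀ i, 2 ≤ p ^ lam i := by
    intro i
    calc 2 ≤ p := hp2
      _ = p ^ 1 := (pow_one p).symm
      _ ≤ p ^ lam i := Nat.pow_le_pow_right hp0 (hlam_pos i)
  have hkey : ∀ i, d * p ^ lam i < p ^ δ + lam i := by
    intro i
    have h2d : 2 * d ≤ d * p ^ lam i := by
      have := Nat.mul_le_mul_left d (hplam i)
      omega
    have hs1 : 1 ≤ d * p ^ lam i - lam i := by
      have := hlam_le_d i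
      omega
    by_contra hcon
    push_neg at hcon
    have hbig := hlen i (d * p ^ lam i - lam i) hs1 (le_refl _)
    have hz : p ^ δ - (d * p ^ lam i - lam i) = 0 := by omega
    rw [hz] at hbig
    simp [padicLength] at hbig
  have hdlt : d < p ^ δ := by
    have h1 := hkey ⟨0, ht⟩
    have h2 : 2 * d ≤ d * p ^ lam ⟨0, ht⟩ := by
      have := Nat.mul_le_mul_left d (hplam ⟨0, ht⟩)
      omega
    have := hlam_le_d ⟨0, ht⟩
    omega
  have hlamlt : ∀ i, lam i < p ^ δ := fun i => lt_of_le_of_lt (hlam_le_d i) hdlt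
  -- the cut-point function
  obtain ⟨c, hcled, hcP, hcmax⟩ :
      ∃ c : ℕ → ℕ, (∀ j, c j ≤ d) ∧ (∀ j, Pfun p d l (c j) ≤ Tfun p t δ lam j) ∧
        (∀ j k, c j < k → k ≤ d → ¬ (Pfun p d l k ≤ Tfun p t δ lam j)) := by
    refine ⟨fun j => Nat.findGreatest (fun k => Pfun p d l k ≤ Tfun p t δ lam j) d,
      ?_, ?_, ?_⟩
    · intro j; exact Nat.findGreatest_le d
    · intro j
      exact Nat.findGreatest_spec (P := fun k => Pfun p d l k ≤ Tfun p t δ lam j)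
        (Nat.zero_le d) (by show Pfun p d l 0 ≤ _; rw [Pfun_zero]; exact Nat.zero_le _)
    · intro j k h1 h2
      exact Nat.findGreatest_is_greatest
        (P := fun k => Pfun p d l k ≤ Tfun p t δ lam j) h1 h2
  -- main claim: prefix sums hit the targets
  have hmain : ∀ j, j ≤ t → Pfun p d l (c j) = Tfun p t δ lam j := by
    intro j
    induction j with
    | zero =>
      intro _
      have h0 : Tfun p t δ lam 0 = 0 := Tfun_zero p t δ lam
      have h1 := hcP 0
      omega
    | succ j ih =>
      intro hjt
      have hjt' : j < t := hjt
      have hPj := ih (le_of_lt hjt')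
      have hTmono : Tfun p t δ lam j ≤ Tfun p t δ lam (j + 1) :=
        Tfun_mono p t δ lam (by omega)
      have hcm : c j ≤ c (j + 1) := by
        by_contra h
        push_neg at h
        exact hcmax (j + 1) (c j) h (hcled j) (le_trans (le_of_eq hPj) hTmono)
      rcases eq_or_lt_of_le (hcP (j + 1)) with heq | hlt
      · exact heq
      exfalso
      obtain ⟨M, hM, hMdvd⟩ := Tfun_split p t δ lam (j + 1)
      have hkd : c (j + 1) < d := by
        rcases lt_or_eq_of_le (hcled (j + 1)) with h | h
        · exact h
        · exfalso
          have hle : Tfun p t δ lam (j + 1) ≤ Pfun p d l d := by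
            rw [Pfun_d, ← hsum, hM]; omega
          rw [h] at hlt
          omega
      have hq := Pfun_succ p d l hkd
      have hmaxk : ¬ (Pfun p d l (c (j+1) + 1) ≤ Tfun p t δ lam (j + 1)) :=
        hcmax (j + 1) (c (j + 1) + 1) (by omega) (by omega)
      set q := p ^ l ⟨c (j+1), hkd⟩ with hqdef
      set r := Tfun p t δ lam (j + 1) - Pfun p d l (c (j+1)) with hrdef
      have hr : r < q := by omega
      have hr0 : 0 < r := by omega
      have hrT : Tfun p t δ lam (j + 1) = Pfun p d l (c (j+1)) + r := by omega
      have hsplit := Pfun_split p d l (le_of_lt hkd : c (j+1) ≤ d)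
      set R := ∑ h ∈ Finset.univ.filter (fun h : Fin d => c (j+1) ≤ h.val ∧ h.val < d),
        p ^ l h with hRdef
      have hdvdR : q ∣ R := by
        apply Finset.dvd_sum
        intro h hh
        simp only [Finset.mem_filter, Finset.mem_univ, true_and] at hh
        exact pow_dvd_pow p (hl (show (⟨c (j+1), hkd⟩ : Fin d) ≤ h from hh.1))
      have hRrM : R = r + M := by
        have h1 : Pfun p d l (c (j+1)) + R = Pfun p d l (c (j+1)) + (r + M) := by
          rw [← hsplit, Pfun_d, ← hsum, hM, hrT]
          ring
        omega
      have hPk_ge : Tfun p t δ lam j ≤ Pfun p d l (c (j+1)) := by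
        rw [← hPj]; exact Pfun_mono p d l hcm
      have hTstep := Tfun_succ p t δ lam hjt'
      have hrle : r ≤ lam ⟨j, hjt'⟩ * p ^ (j * δ) := by omega
      have hrlt : r < p ^ ((j + 1) * δ) := by
        have h1 : lam ⟨j, hjt'⟩ * p ^ (j * δ) < p ^ δ * p ^ (j * δ) :=
          (Nat.mul_lt_mul_right (pow_pos hp0 _)).mpr (hlamlt _)
        have h2 : p ^ δ * p ^ (j * δ) = p ^ ((j + 1) * δ) := by
          rw [← pow_add]; ring_nf
        omega
      rcases le_or_gt (l ⟨c (j+1), hkd⟩) ((j + 1) * δ) with hcase | hcase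
      · have hqM : q ∣ M := dvd_trans (pow_dvd_pow p hcase) hMdvd
        have hqr : q ∣ r := by
          have := Nat.dvd_sub hdvdR hqM
          rwa [show R - M = r by omega] at this
        have := Nat.eq_zero_of_dvd_of_lt hqr hr
        omega
      · have hpj : p ^ ((j + 1) * δ) ∣ q := pow_dvd_pow p (le_of_lt hcase)
        have h1 : p ^ ((j + 1) * δ) ∣ R := dvd_trans hpj hdvdR
        have h2 : p ^ ((j + 1) * δ) ∣ r := by
          have := Nat.dvd_sub h1 hMdvd
          rwa [show R - M = r by omega] at this
        have := Nat.eq_zero_of_dvd_of_lt h2 hrlt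
        omega
  
  have hct : c t = d := by
    have h1 := hmain t (le_refl t)
    have h2 : Tfun p t δ lam t = Pfun p d l d := by rw [Tfun_t, Pfun_d]; exact hsum
    exact Pfun_inj p d l hp0 (hcled t) (le_refl d) (by rw [h1, h2])
  have hc0 : c 0 = 0 := by
    have h1 := hmain 0 (Nat.zero_le t)
    rw [Tfun_zero] at h1
    exact Pfun_inj p d l hp0 (hcled 0) (Nat.zero_le d) (by rw [h1, Pfun_zero])
  have hcstep : ∀ j, j < t → c j < c (j + 1) := by
    intro j hj
    have hT : Tfun p t δ lam j < Tfun p t δ lam (j + 1) := by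
      have h1 := Tfun_succ p t δ lam hj
      have hpos : 0 < lam ⟨j, hj⟩ * p ^ (j * δ) := Nat.mul_pos (hlam_pos _) (pow_pos hp0 _)
      omega
    by_contra h
    push_neg at h
    have h2 := Pfun_mono p d l h
    rw [hmain j (le_of_lt hj), hmain (j + 1) hj] at h2
    omega
  have hcmono : ∀ a b, a ≤ b → b ≤ t → c a ≤ c b := by
    intro a b hab hbt
    induction b, hab using Nat.le_induction with
    | base => exact le_refl _
    | succ b hb ih =>
      exact le_trans (ih (by omega)) (le_of_lt (hcstep b (by omega)))
  have hcover : ∀ j, j ≤ t → ∀ x : Fin d, x.val < c j →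
      ∃ m : ℕ, m < j ∧ c m ≤ x.val ∧ x.val < c (m + 1) := by
    intro j hjt x hx
    have hspec : c (Nat.findGreatest (fun i => c i ≤ x.val) j) ≤ x.val :=
      Nat.findGreatest_spec (P := fun i => c i ≤ x.val) (Nat.zero_le j)
        (by show c 0 ≤ x.val; rw [hc0]; exact Nat.zero_le _)
    have hlej : Nat.findGreatest (fun i => c i ≤ x.val) j ≤ j :=
      Nat.findGreatest_le j
    have hltj : Nat.findGreatest (fun i => c i ≤ x.val) j < j := by
      rcases lt_or_eq_of_le hlej with h | h
      · exact h
      · rw [h] at hspec; omega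
    refine ⟨_, hltj, hspec, ?_⟩
    by_contra hcon
    push_neg at hcon
    exact Nat.findGreatest_is_greatest (P := fun i => c i ≤ x.val)
      (Nat.lt_succ_self _) (by omega) hcon
  have hsumE : ∀ i : Fin t,
      ∑ h ∈ Finset.univ.filter
        (fun h : Fin d => c i.val ≤ h.val ∧ h.val < c (i.val + 1)), p ^ l h
        = lam i * p ^ (i.val * δ) := by
    intro i
    have h1 := Pfun_split p d l (le_of_lt (hcstep i.val i.isLt))
    have h2 := hmain i.val (le_of_lt i.isLt)
    have h3 := hmain (i.val + 1) i.isLt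
    have h4 := Tfun_succ p t δ lam i.isLt
    simp only [Fin.eta] at h4
    omega
  refine ⟨fun i => Finset.univ.filter
      (fun h : Fin d => c i.val ≤ h.val ∧ h.val < c (i.val + 1)),
    ⟨?_, ?_, ?_, ?_, ?_⟩, ?_⟩
  · -- disjoint
    intro i j hij
    rw [Finset.disjoint_left]
    intro x hxi hxj
    simp only [Finset.mem_filter, Finset.mem_univ, true_and] at hxi hxj
    have hne : i.val ≠ j.val := fun h => hij (Fin.ext h)
    rcases lt_or_gt_of_ne hne with h | h
    · have := hcmono (i.val + 1) j.val h j.isLt.le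
      omega
    · have := hcmono (j.val + 1) i.val h i.isLt.le
      omega
  · -- cover
    rw [Finset.eq_univ_iff_forall]
    intro x
    rw [Finset.mem_biUnion]
    obtain ⟨m, hm1, hm2, hm3⟩ := hcover t (le_refl t) x (by rw [hct]; exact x.isLt)
    refine ⟨⟨m, hm1⟩, Finset.mem_univ _, ?_⟩
    simp only [Finset.mem_filter, Finset.mem_univ, true_and]
    exact ⟨hm2, hm3⟩
  · -- sums
    intro i
    rw [mul_comm]
    exact hsumE i
  · -- intervals
    intro i
    have h1 : c i.val < c (i.val + 1) := hcstep i.val i.isLt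
    have h2 : c (i.val + 1) ≤ d := hcled _
    refine ⟨⟨c i.val, by omega⟩, ⟨c (i.val + 1) - 1, by omega⟩, ?_⟩
    ext x
    simp only [Finset.mem_filter, Finset.mem_univ, true_and, Finset.mem_Icc, Fin.le_def]
    omega
  · -- card
    have hs0 := hsumE ⟨0, ht⟩
    have hle : ∀ x ∈ Finset.univ.filter (fun h : Fin d =>
        c (Fin.val (⟨0, ht⟩ : Fin t)) ≤ h.val ∧ h.val < c (Fin.val (⟨0, ht⟩ : Fin t) + 1)),
        1 ≤ p ^ l x := fun x _ => Nat.one_le_pow _ _ hp0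
    have hcard := Finset.card_nsmul_le_sum _ _ _ hle
    rw [hs0] at hcard
    simpa using hcard
  · -- uniqueness
    intro E' hE'
    obtain ⟨hdis', hcov', hsum', hicc', hcard'⟩ := hE'
    have hne' : ∀ i : Fin t, (E' i).Nonempty := by
      intro i
      rw [Finset.nonempty_iff_ne_empty]
      intro h
      have h1 := hsum' i
      rw [h, Finset.sum_empty] at h1
      have h2 := Nat.mul_pos (pow_pos hp0 (i.val * δ)) (hlam_pos i)
      omega
    have huniq : ∀ n : ℕ, ∀ i : Fin t, i.val = n →
        E' i = Finset.univ.filter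
          (fun h : Fin d => c i.val ≤ h.val ∧ h.val < c (i.val + 1)) := by
      intro n
      induction n using Nat.strong_induction_on with
      | _ n IH =>
        intro i hin
        subst hin
        have hearlier : ∀ j : Fin t, j.val < i.val → E' j = Finset.univ.filter
            (fun h : Fin d => c j.val ≤ h.val ∧ h.val < c (j.val + 1)) :=
          fun j hj => IH j.val hj j rfl
        have hges : ∀ x : Fin d, ∀ j : Fin t, x ∈ E' j → i.val ≤ j.val →
            c i.val ≤ x.val := by
          intro x j hx hij
          by_contra hcon
          push_neg at hcon
          obtain ⟨m, hm1, hm2, hm3⟩ := hcover i.val i.isLt.le x hcon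
          have hxm : x ∈ E' ⟨m, lt_trans hm1 i.isLt⟩ := by
            rw [hearlier ⟨m, lt_trans hm1 i.isLt⟩ hm1]
            simp only [Finset.mem_filter, Finset.mem_univ, true_and]
            exact ⟨hm2, hm3⟩
          have hne2 : (⟨m, lt_trans hm1 i.isLt⟩ : Fin t) ≠ j := by
            intro h
            have h2 : m = j.val := congrArg Fin.val h
            omega
          exact Finset.disjoint_left.mp (hdis' _ _ hne2) hxm hx
        have hcid : c i.val < d := lt_of_lt_of_le (hcstep i.val i.isLt) (hcled _)
        have hh0 : (⟨c i.val, hcid⟩ : Fin d) ∈ Finset.univ.biUnion E' := by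
          rw [hcov']; exact Finset.mem_univ _
        obtain ⟨m, _, hm⟩ := Finset.mem_biUnion.mp hh0
        have hmge : i.val ≤ m.val := by
          by_contra hcon
          push_neg at hcon
          rw [hearlier m hcon] at hm
          simp only [Finset.mem_filter, Finset.mem_univ, true_and] at hm
          have h2 := hcmono (m.val + 1) i.val hcon i.isLt.le
          omega
        rcases eq_or_lt_of_le hmge with hmi | hmi
        · -- m = i : compute the block
          have hmi' : m = i := Fin.ext hmi.symm
          rw [hmi'] at hm
          obtain ⟨a, b, hab⟩ := hicc' i
          have habne : a ≤ b := by
            obtain ⟨x, hx⟩ := hne' i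
            rw [hab] at hx
            exact Finset.nonempty_Icc.mp ⟨x, hx⟩
          have haE : a ∈ E' i := by rw [hab]; exact Finset.mem_Icc.mpr ⟨le_refl a, habne⟩
          have hage : c i.val ≤ a.val := hges a i haE (le_refl _)
          have hah0 : a ≤ (⟨c i.val, hcid⟩ : Fin d) := by
            rw [hab] at hm
            exact (Finset.mem_Icc.mp hm).1
          have haval : a.val = c i.val := le_antisymm hah0 hage
          have hfilter : Finset.Icc a b = Finset.univ.filter
              (fun h : Fin d => a.val ≤ h.val ∧ h.val < b.val + 1) := by
            ext x
            simp only [Finset.mem_Icc, Finset.mem_filter, Finset.mem_univ, true_and,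
              Fin.le_def]
            omega
          have hsplit2 := Pfun_split p d l (show a.val ≤ b.val + 1 by omega)
          have hsum2 : ∑ h ∈ Finset.univ.filter
              (fun h : Fin d => a.val ≤ h.val ∧ h.val < b.val + 1), p ^ l h
              = lam i * p ^ (i.val * δ) := by
            rw [← hfilter, ← hab, hsum' i, mul_comm]
          have hPa : Pfun p d l a.val = Tfun p t δ lam i.val := by
            rw [haval]; exact hmain i.val i.isLt.le
          have hTstep := Tfun_succ p t δ lam i.isLt
          simp only [Fin.eta] at hTstep
          have hPb : Pfun p d l (b.val + 1) = Tfun p t δ lam (i.val + 1) := by omega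
          have hbc : b.val + 1 = c (i.val + 1) := by
            apply Pfun_inj p d l hp0 (by omega : b.val + 1 ≤ d) (hcled _)
            rw [hPb, hmain (i.val + 1) i.isLt]
          rw [hab, hfilter]
          ext x
          simp only [Finset.mem_filter, Finset.mem_univ, true_and]
          omega
        · -- i.val < m.val : contradiction
          exfalso
          obtain ⟨a, b, hab⟩ := hicc' m
          have habne : a ≤ b := by
            obtain ⟨x, hx⟩ := hne' m
            rw [hab] at hx
            exact Finset.nonempty_Icc.mp ⟨x, hx⟩
          have hah0 : a ≤ (⟨c i.val, hcid⟩ : Fin d) := by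
            rw [hab] at hm
            exact (Finset.mem_Icc.mp hm).1
          obtain ⟨x0, hx0⟩ := hne' i
          have hx0ge : c i.val ≤ x0.val := hges x0 i hx0 (le_refl _)
          have hnim : i ≠ m := by
            intro h
            rw [h] at hmi
            omega
          have hx0nm : x0 ∉ E' m := fun h =>
            Finset.disjoint_left.mp (hdis' i m hnim) hx0 h
          have hbx0 : b.val < x0.val := by
            by_contra hcon
            push_neg at hcon
            apply hx0nm
            rw [hab]
            refine Finset.mem_Icc.mpr ⟨?_, ?_⟩
            · rw [Fin.le_def]
              have := hah0
              rw [Fin.le_def] at this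
              simp only [] at this
              omega
            · rw [Fin.le_def]; omega
          have hx0le : p ^ l x0 ≤ p ^ (i.val * δ) * lam i := by
            have h1 := Finset.single_le_sum (f := fun h => p ^ l h)
              (fun x _ => Nat.zero_le _) hx0
            rw [hsum' i] at h1
            exact h1
          have hbound : ∀ y ∈ E' m, p ^ l y ≤ p ^ (i.val * δ + (lam i - 1)) := by
            intro y hy
            have hyb : y.val ≤ b.val := by
              rw [hab] at hy
              have := (Finset.mem_Icc.mp hy).2
              rw [Fin.le_def] at this
              exact this
            have hylx : l y ≤ l x0 := hl (show y ≤ x0 by rw [Fin.le_def]; omega)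
            have h1 : p ^ l y ≤ p ^ (i.val * δ) * lam i :=
              le_trans (Nat.pow_le_pow_right hp0 hylx) hx0le
            have h2 : p ^ (i.val * δ) * lam i < p ^ (i.val * δ + lam i) := by
              rw [pow_add]
              exact (Nat.mul_lt_mul_left (pow_pos hp0 _)).mpr
                (Nat.lt_pow_self (by omega : 1 < p))
            have h3 : l y < i.val * δ + lam i :=
              (Nat.pow_lt_pow_iff_right (by omega : 1 < p)).mp (lt_of_le_of_lt h1 h2)
            have h4 : lam i ≥ 1 := hlam_pos i
            exact Nat.pow_le_pow_right hp0 (by omega)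
          have hcardm : (E' m).card ≤ d := by
            have := Finset.card_le_univ (E' m)
            simpa using this
          have hsm : ∑ h ∈ E' m, p ^ l h ≤ d * p ^ (i.val * δ + (lam i - 1)) := by
            have h1 := Finset.sum_le_card_nsmul (E' m) _ _ hbound
            rw [smul_eq_mul] at h1
            exact le_trans h1 (Nat.mul_le_mul_right _ hcardm)
          have hsm2 : p ^ ((i.val + 1) * δ) ≤ ∑ h ∈ E' m, p ^ l h := by
            rw [hsum' m]
            calc p ^ ((i.val + 1) * δ) ≤ p ^ (m.val * δ) :=
                Nat.pow_le_pow_right hp0 (Nat.mul_le_mul_right δ hmi)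
              _ ≤ p ^ (m.val * δ) * lam m := Nat.le_mul_of_pos_right _ (hlam_pos m)
          have hA : p ^ (i.val * δ) * p ^ δ ≤ p ^ (i.val * δ) * (d * p ^ (lam i - 1)) := by
            calc p ^ (i.val * δ) * p ^ δ = p ^ ((i.val + 1) * δ) := by
                  rw [← pow_add]; ring_nf
              _ ≤ d * p ^ (i.val * δ + (lam i - 1)) := le_trans hsm2 hsm
              _ = p ^ (i.val * δ) * (d * p ^ (lam i - 1)) := by rw [pow_add]; ring
          have hA2 : p ^ δ ≤ d * p ^ (lam i - 1) :=
            Nat.le_of_mul_le_mul_left hA (pow_pos hp0 _)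
          have hB : d * p ^ lam i = d * p ^ (lam i - 1) * p := by
            rw [mul_assoc, ← pow_succ]
            congr 2
            have := hlam_pos i
            omega
          have hC : p ^ δ * 2 ≤ d * p ^ lam i := by
            rw [hB]
            calc p ^ δ * 2 ≤ p ^ δ * p := Nat.mul_le_mul_left _ hp2
              _ ≤ d * p ^ (lam i - 1) * p := Nat.mul_le_mul_right _ hA2
          have hD := hkey i
          have hE2 := hlam_le_d i
          linarith
    funext i
    exact huniq i.val i rfl
end

section
/- Let p be a prime number, let d ≥ 1 and λ_1 ≥ 1 be natural numbers, and let δ and N be natural numbers such that for every natural number s with 1 ≤ s ≤ d·p^{λ_1} − λ_1, the p-adic length of p^δ − s is strictly greater than d. Suppose l_1 ≤ l_2 ≤ … ≤ l_d is a non-decreasing sequence of natural numbers satisfying p^{l_1} + p^{l_2} + … + p^{l_d} = λ_1 + p^{δ}·N. Let τ be the number of indices i with p^{l_i} ≤ λ_1. Then ∑_{i=1}^{τ} p^{l_i} = λ_1. -/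
lemma padicLength_zero (p : ℕ) : padicLength p 0 = 0 := by simp [padicLength]

lemma padicLength_rec (p : ℕ) (hp : 2 ≤ p) {n : ℕ} (hn : n ≠ 0) :
    padicLength p n = n % p + padicLength p (n / p) := by
  unfold padicLength
  rw [Nat.digits_def' (by omega : 1 < p) (Nat.pos_of_ne_zero hn)]
  simp

lemma padicLength_one (p : ℕ) (hp : 2 ≤ p) : padicLength p 1 = 1 := by
  rw [padicLength_rec p hp one_ne_zero, Nat.mod_eq_of_lt (by omega),
    Nat.div_eq_of_lt (by omega)]
  simp [padicLength]

lemma padicLength_add_le_aux (p : ℕ) (hp : 2 ≤ p) :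
    ∀ n a b : ℕ, a + b ≤ n →
      padicLength p (a + b) ≤ padicLength p a + padicLength p b := by
  intro n
  induction n with
  | zero =>
    intro a b h
    have ha : a = 0 := by omega
    have hb : b = 0 := by omega
    subst ha; subst hb; simp
  | succ n ih =>
    intro a b h
    rcases Nat.eq_zero_or_pos a with rfl | ha
    · simp
    rcases Nat.eq_zero_or_pos b with rfl | hb
    · simp
    have hab : a + b ≠ 0 := by omega
    have hdiv : (a + b) / p = a / p + b / p + if p ≤ a % p + b % p then 1 else 0 :=
      Nat.add_div (by omega)
    have hap : a / p < a := Nat.div_lt_self ha (by omega)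
    have hbp : b / p < b := Nat.div_lt_self hb (by omega)
    have hamod : a % p < p := Nat.mod_lt a (by omega)
    have hbmod : b % p < p := Nat.mod_lt b (by omega)
    rw [padicLength_rec p hp hab, padicLength_rec p hp (by omega : a ≠ 0),
      padicLength_rec p hp (by omega : b ≠ 0)]
    by_cases hc : p ≤ a % p + b % p
    · have hmod : (a + b) % p = a % p + b % p - p := by
        rw [Nat.add_mod, Nat.mod_eq_sub_mod hc, Nat.mod_eq_of_lt (by omega)]
      have ih1 : padicLength p (a / p + b / p + 1) ≤
          padicLength p (a / p + b / p) + padicLength p 1 := ih _ _ (by omega)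
      have ih2 : padicLength p (a / p + b / p) ≤
          padicLength p (a / p) + padicLength p (b / p) := ih _ _ (by omega)
      have h1 := padicLength_one p hp
      rw [hdiv, if_pos hc, hmod]
      omega
    · have hmod : (a + b) % p = a % p + b % p := by
        rw [Nat.add_mod, Nat.mod_eq_of_lt (by omega)]
      have ih2 : padicLength p (a / p + b / p) ≤
          padicLength p (a / p) + padicLength p (b / p) := ih _ _ (by omega)
      rw [hdiv, if_neg hc, hmod, Nat.add_zero]
      omega

lemma padicLength_add_le (p : ℕ) (hp : 2 ≤ p) (a b : ℕ) :
    padicLength p (a + b) ≤ padicLength p a + padicLength p b :=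
  padicLength_add_le_aux p hp (a + b) a b le_rfl

lemma padicLength_mod_le (p : ℕ) (hp : 2 ≤ p) (e : ℕ) :
    ∀ a : ℕ, padicLength p (a % p ^ e) ≤ padicLength p a := by
  induction e with
  | zero => intro a; simp [padicLength, Nat.mod_one]
  | succ e ih =>
    intro a
    rcases eq_or_ne a 0 with rfl | ha
    · simp
    rcases eq_or_ne (a % p ^ (e + 1)) 0 with h0 | h0
    · simp [h0, padicLength]
    rw [padicLength_rec p hp h0, padicLength_rec p hp ha]
    have h1 : a % p ^ (e + 1) % p = a % p :=
      Nat.mod_mod_of_dvd a (dvd_pow_self p (Nat.succ_ne_zero e))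
    have h2 : a % p ^ (e + 1) / p = a / p % p ^ e := by
      rw [pow_succ']
      exact Nat.mod_mul_right_div_self a p (p ^ e)
    rw [h1, h2]
    exact Nat.add_le_add_left (ih (a / p)) _

lemma padicLength_pow (p : ℕ) (hp : 2 ≤ p) (k : ℕ) : padicLength p (p ^ k) = 1 := by
  induction k with
  | zero => simpa using padicLength_one p hp
  | succ k ih =>
    rw [padicLength_rec p hp (pow_ne_zero _ (by omega))]
    have h1 : p ^ (k + 1) % p = 0 := by
      rw [pow_succ]
      exact Nat.mul_mod_left _ _
    have h2 : p ^ (k + 1) / p = p ^ k := by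
      rw [pow_succ]
      exact Nat.mul_div_cancel _ (by omega)
    rw [h1, h2, ih]

lemma padicLength_sum_pow_le {ι : Type*} (p : ℕ) (hp : 2 ≤ p) (s : Finset ι) (f : ι → ℕ) :
    padicLength p (∑ i ∈ s, p ^ f i) ≤ s.card := by
  induction s using Finset.cons_induction with
  | empty => simp [padicLength]
  | cons a s has ih =>
    rw [Finset.sum_cons, Finset.card_cons]
    calc padicLength p (p ^ f a + ∑ i ∈ s, p ^ f i)
        ≤ padicLength p (p ^ f a) + padicLength p (∑ i ∈ s, p ^ f i) :=
          padicLength_add_le p hp _ _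
      _ ≤ 1 + s.card := by
          have := padicLength_pow p hp (f a)
          omega
      _ = s.card + 1 := by omega

/-- Let `p` be prime, `d ≥ 1`, `λ₁ ≥ 1`, and `δ, N` naturals such that for every
`1 ≤ s ≤ d·p^{λ₁} − λ₁` the `p`-adic length of `p^δ − s` is `> d`.
If `l₁ ≤ … ≤ l_d` satisfies `p^{l₁} + ⋯ + p^{l_d} = λ₁ + p^δ·N`, and `τ` is the number
of indices `i` with `p^{l_i} ≤ λ₁`, then the sum of `p^{l_i}` over these first `τ`
indices equals `λ₁`. -/
theorem stmt4 (p : ℕ) (hp : p.Prime) (d : ℕ) (hd : 1 ≤ d)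
    (lam1 : ℕ) (hlam1 : 1 ≤ lam1) (δ N : ℕ)
    (hlen : ∀ s : ℕ, 1 ≤ s → s ≤ d * p ^ lam1 - lam1 →
      d < padicLength p (p ^ δ - s))
    (l : Fin d → ℕ) (hl : Monotone l)
    (hsum : ∑ i : Fin d, p ^ l i = lam1 + p ^ δ * N) :
    ∑ i ∈ Finset.univ.filter (fun i : Fin d => p ^ l i ≤ lam1), p ^ l i = lam1 := by
  classical
  have hp2 := hp.two_le
  -- basic numeric facts
  have h2l : 2 * lam1 ≤ p ^ lam1 := by
    have h1 : lam1 - 1 < 2 ^ (lam1 - 1) := Nat.lt_two_pow_self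
    have h2 : 2 ^ lam1 ≤ p ^ lam1 := Nat.pow_le_pow_left hp2 _
    have h3 : 2 ^ lam1 = 2 * 2 ^ (lam1 - 1) := by
      rw [← pow_succ']
      congr 1
      omega
    omega
  have hP0 : 0 < p ^ δ := pow_pos (by omega) δ
  have hdP : p ^ lam1 ≤ d * p ^ lam1 := Nat.le_mul_of_pos_left _ (by omega)
  have hPW : d * p ^ lam1 - lam1 < p ^ δ := by
    by_contra hcon
    push_neg at hcon
    have h0 := hlen (p ^ δ) hP0 hcon
    simp [Nat.sub_self, padicLength] at h0
  set bigS := Finset.univ.filter (fun i : Fin d => ¬ p ^ l i ≤ lam1) with hbigS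
  set A := ∑ i ∈ Finset.univ.filter (fun i : Fin d => p ^ l i ≤ lam1), p ^ l i with hA
  set B := ∑ i ∈ bigS, p ^ l i with hB
  have hAB : A + B = lam1 + p ^ δ * N := by
    rw [hA, hB, hbigS, Finset.sum_filter_add_sum_filter_not]
    exact hsum
  have hcard : bigS.card ≤ d := by
    refine (Finset.card_filter_le _ _).trans ?_
    simp
  have hAle : A ≤ d * lam1 := by
    have h1 : A ≤ (Finset.univ.filter (fun i : Fin d => p ^ l i ≤ lam1)).card • lam1 :=
      Finset.sum_le_card_nsmul _ _ _ (fun i hi => (Finset.mem_filter.mp hi).2)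
    have h2 : (Finset.univ.filter (fun i : Fin d => p ^ l i ≤ lam1)).card ≤ d := by
      refine (Finset.card_filter_le _ _).trans ?_
      simp
    rw [smul_eq_mul] at h1
    exact h1.trans (Nat.mul_le_mul_right _ h2)
  have hl1 : lam1 ≤ d * lam1 := Nat.le_mul_of_pos_left _ (by omega)
  have hdl : d * lam1 + lam1 ≤ d * p ^ lam1 := by
    have h4 : d * (2 * lam1) ≤ d * p ^ lam1 := Nat.mul_le_mul_left d h2l
    have h5 : d * (2 * lam1) = 2 * (d * lam1) := by ring
    omega
  have hAP : A < p ^ δ := by omega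
  have hl1P : lam1 < p ^ δ := by omega
  set u := B % p ^ δ with hu
  set K := B / p ^ δ with hK
  have hBu : p ^ δ * K + u = B := Nat.div_add_mod B (p ^ δ)
  have huP : u < p ^ δ := Nat.mod_lt _ hP0
  have hcase : A + u = lam1 ∨ A + u = lam1 + p ^ δ := by
    have hmodeq : (A + u) % p ^ δ = lam1 := by
      have e1 : (A + B) % p ^ δ = (A + u) % p ^ δ := by
        conv_lhs => rw [Nat.add_mod]
        rw [← hu, Nat.add_mod A u, Nat.mod_eq_of_lt huP]
      have e2 : (A + B) % p ^ δ = lam1 := by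
        rw [hAB, Nat.add_mul_mod_self_left, Nat.mod_eq_of_lt hl1P]
      omega
    obtain ⟨q, hq⟩ : ∃ q, (A + u) / p ^ δ = q := ⟨_, rfl⟩
    have hdm := Nat.div_add_mod (A + u) (p ^ δ)
    rw [hmodeq, hq] at hdm
    clear hq
    have hqle : q < 2 := by
      by_contra hcon
      push_neg at hcon
      have h2 : p ^ δ * 2 ≤ p ^ δ * q := Nat.mul_le_mul_left _ hcon
      omega
    have hq01 : q = 0 ∨ q = 1 := by omega
    rcases hq01 with rfl | rfl
    · left
      rw [Nat.mul_zero] at hdm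
      omega
    · right
      rw [Nat.mul_one] at hdm
      omega
  rcases hcase with hc | hc
  · -- A + u = lam1
    rcases Nat.eq_zero_or_pos u with hu0 | hu0
    · omega
    exfalso
    have hBpos : 0 < B := lt_of_lt_of_le hu0 (Nat.mod_le B _)
    have hne : bigS.Nonempty := by
      by_contra hcon
      rw [Finset.not_nonempty_iff_eq_empty] at hcon
      rw [hB, hcon, Finset.sum_empty] at hBpos
      omega
    obtain ⟨i₀, hi₀, hmin⟩ := Finset.exists_min_image bigS l hne
    have hdvd : p ^ l i₀ ∣ B := by
      rw [hB]
      exact Finset.dvd_sum (fun j hj => pow_dvd_pow p (hmin j hj))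
    have hbig : lam1 < p ^ l i₀ := by
      have h1 : i₀ ∈ Finset.univ.filter (fun i : Fin d => ¬ p ^ l i ≤ lam1) := by
        rw [← hbigS]; exact hi₀
      have := (Finset.mem_filter.mp h1).2
      omega
    rcases le_or_gt (l i₀) δ with hle | hlt
    · have h1 : p ^ l i₀ ∣ p ^ δ := pow_dvd_pow p hle
      have h2 : p ^ l i₀ ∣ u := (Nat.dvd_mod_iff h1).mpr hdvd
      have h3 := Nat.le_of_dvd hu0 h2
      omega
    · have h2 : p ^ δ ∣ B := dvd_trans (pow_dvd_pow p hlt.le) hdvd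
      have h3 : u = 0 := by
        obtain ⟨c, hcq⟩ := h2
        rw [hu, hcq, Nat.mul_mod_right]
      omega
  · -- A + u = lam1 + p ^ δ
    exfalso
    have hs1 : 1 ≤ A - lam1 := by omega
    have hsW : A - lam1 ≤ d * p ^ lam1 - lam1 := by omega
    have hlen' := hlen (A - lam1) hs1 hsW
    have hPs : p ^ δ - (A - lam1) = u := by omega
    rw [hPs] at hlen'
    have h4 : padicLength p u ≤ padicLength p B := by
      rw [hu]
      exact padicLength_mod_le p hp2 δ B
    have h5 : padicLength p B ≤ bigS.card := by
      rw [hB]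
      exact padicLength_sum_pow_le p hp2 bigS _
    omega
end
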